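/- For all x > 0, y > 0, and σ > 0, ∫_0^σ h(σ − τ, y)·h(τ, x) dτ = h(σ, x + y), where h(t, z) = z·exp(−(z − t)²/(2t))/√(2πt³) for t > 0 and h(t, z) = 0 for t ≤ 0. -/

import Mathlib

open Set MeasureTheory

/-- First-passage density `h t z = z exp(-(z-t)²/(2t))/√(2πt³)` for `t > 0`, `0` else. -/
noncomputable def hker (t z : ℝ) : ℝ :=
  if 0 < t then z * Real.exp (-(z - t) ^ 2 / (2 * t)) / Real.sqrt (2 * Real.pi * t ^ 3)
  else 0

open Filter Real Topology Function intervalIntegral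

section FPAux

/-! Auxiliary machinery for the convolution identity. -/

noncomputable def Phi (s : ℝ) : ℝ := ∫ t in (0:ℝ)..s, Real.exp (-t^2/2)

lemma gauss_cont : Continuous fun t : ℝ => Real.exp (-t^2/2) := by continuity

lemma gauss_eq : (fun t : ℝ => Real.exp (-t^2/2)) = fun t : ℝ => Real.exp (-(1/2) * t^2) := by
  funext t; ring_nf

lemma gauss_integrable : Integrable (fun t : ℝ => Real.exp (-t^2/2)) := by
  rw [gauss_eq]; exact integrable_exp_neg_mul_sq (by norm_num)

lemma Phi_hasDerivAt (s : ℝ) : HasDerivAt Phi (Real.exp (-s^2/2)) s :=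
  intervalIntegral.integral_hasDerivAt_right (gauss_integrable.intervalIntegrable)
    (gauss_cont.stronglyMeasurableAtFilter _ _) gauss_cont.continuousAt

lemma gauss_Ioi : ∫ t in Ioi (0:ℝ), Real.exp (-t^2/2) = Real.sqrt (2*Real.pi)/2 := by
  rw [gauss_eq, integral_gaussian_Ioi]
  rw [show Real.pi / (1/2) = 2*Real.pi by ring]

lemma Phi_atTop : Tendsto Phi atTop (𝓝 (Real.sqrt (2*Real.pi)/2)) := by
  have h := MeasureTheory.intervalIntegral_tendsto_integral_Ioi 0
    gauss_integrable.integrableOn tendsto_id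
  rwa [gauss_Ioi] at h

lemma Phi_atBot : Tendsto Phi atBot (𝓝 (-(Real.sqrt (2*Real.pi)/2))) := by
  have h := MeasureTheory.intervalIntegral_tendsto_integral_Iic 0
    gauss_integrable.integrableOn tendsto_id
  have hv : ∫ t in Iic (0:ℝ), Real.exp (-t^2/2) = Real.sqrt (2*Real.pi)/2 := by
    have h2 : ∫ t in Iic (0:ℝ), Real.exp (-(-t)^2/2) = ∫ t in Ioi (-(0:ℝ)), Real.exp (-t^2/2) :=
      integral_comp_neg_Iic 0 (fun t => Real.exp (-t^2/2))
    simp only [neg_sq, neg_zero] at h2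
    rw [h2, gauss_Ioi]
  rw [hv] at h
  have heq : Phi = fun s => -∫ t in s..(0:ℝ), Real.exp (-t^2/2) := by
    funext s; rw [Phi, intervalIntegral.integral_symm]
  rw [heq]
  exact h.neg

lemma myFTC {f f' : ℝ → ℝ} {a b fa fb : ℝ} (hab : a < b)
    (hderiv : ∀ x ∈ Ioo a b, HasDerivAt f (f' x) x)
    (ha : Tendsto f (𝓝[>] a) (𝓝 fa)) (hb : Tendsto f (𝓝[<] b) (𝓝 fb))
    (hpos : ∀ x ∈ Ioo a b, 0 ≤ f' x) :
    IntervalIntegrable f' volume a b ∧ ∫ y in a..b, f' y = fb - fa := by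
  set F : ℝ → ℝ := update (update f a fa) b fb with hF
  have Fderiv : ∀ x ∈ Ioo a b, HasDerivAt F (f' x) x := by
    refine fun x hx => (hderiv x hx).congr_of_eventuallyEq ?_
    filter_upwards [Ioo_mem_nhds hx.1 hx.2] with _ hy
    rw [hF, update_of_ne hy.2.ne, update_of_ne hy.1.ne']
  have hcont : ContinuousOn F (Icc a b) := by
    rw [hF, continuousOn_update_iff, continuousOn_update_iff, Icc_sdiff_right, Ico_sdiff_left]
    refine ⟨⟨fun z hz => (hderiv z hz).continuousAt.continuousWithinAt, ?_⟩, ?_⟩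
    · exact fun _ => ha.mono_left (nhdsWithin_mono _ Ioo_subset_Ioi_self)
    · rintro -
      refine (hb.congr' ?_).mono_left (nhdsWithin_mono _ Ico_subset_Iio_self)
      filter_upwards [Ioo_mem_nhdsLT_of_mem (right_mem_Ioc.2 hab)] with _ hz using
        (update_of_ne hz.1.ne' _ _).symm
  have hint : IntervalIntegrable f' volume a b := by
    rw [intervalIntegrable_iff_integrableOn_Ioc_of_le hab.le]
    exact intervalIntegral.integrableOn_deriv_of_nonneg hcont Fderiv hpos
  refine ⟨hint, ?_⟩
  simpa [F, hab.ne, hab.ne'] using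
    intervalIntegral.integral_eq_sub_of_hasDerivAt_of_le hab.le hcont Fderiv hint

noncomputable def uker (x y σ τ : ℝ) : ℝ :=
  (x*(σ-τ) - y*τ) / (Real.sqrt σ * (Real.sqrt τ * Real.sqrt (σ-τ)))

lemma hasDerivAt_uker {x y σ : ℝ} (hσ : 0 < σ) {τ : ℝ} (hτ : τ ∈ Ioo 0 σ) :
    HasDerivAt (uker x y σ)
      (-(Real.sqrt σ/2) * ((x*(σ-τ)+y*τ)/(Real.sqrt τ * Real.sqrt (σ-τ))^3)) τ := by
  obtain ⟨h1, h2⟩ := hτ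
  have h3 : 0 < σ - τ := by linarith
  have hp : 0 < Real.sqrt τ := Real.sqrt_pos.2 h1
  have hq : 0 < Real.sqrt (σ-τ) := Real.sqrt_pos.2 h3
  have hs : 0 < Real.sqrt σ := Real.sqrt_pos.2 hσ
  have hp2 : Real.sqrt τ ^ 2 = τ := Real.sq_sqrt h1.le
  have hq2 : Real.sqrt (σ-τ) ^ 2 = σ - τ := Real.sq_sqrt h3.le
  have hs2 : Real.sqrt σ ^ 2 = σ := Real.sq_sqrt hσ.le
  have hN : HasDerivAt (fun t => x*(σ-t) - y*t) (x*(0-1) - y*1) τ :=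
    (((hasDerivAt_const τ σ).sub (hasDerivAt_id τ)).const_mul x).sub
      ((hasDerivAt_id τ).const_mul y)
  have hdp : HasDerivAt (fun t : ℝ => Real.sqrt t) (1/(2*Real.sqrt τ)) τ :=
    Real.hasDerivAt_sqrt h1.ne'
  have hdq : HasDerivAt (fun t : ℝ => Real.sqrt (σ-t)) (1/(2*Real.sqrt (σ-τ)) * (0-1)) τ :=
    (Real.hasDerivAt_sqrt h3.ne').comp τ ((hasDerivAt_const τ σ).sub (hasDerivAt_id τ))
  have hD : HasDerivAt (fun t => Real.sqrt σ * (Real.sqrt t * Real.sqrt (σ-t)))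
      (Real.sqrt σ * (1/(2*Real.sqrt τ) * Real.sqrt (σ-τ) +
        Real.sqrt τ * (1/(2*Real.sqrt (σ-τ)) * (0-1)))) τ :=
    (hdp.mul hdq).const_mul _
  have hDne : Real.sqrt σ * (Real.sqrt τ * Real.sqrt (σ-τ)) ≠ 0 := by positivity
  have := hN.div hD hDne
  convert this using 1
  case e'_4 => rfl
  case e'_5 => rfl
  case e'_8 => rfl
  set p := Real.sqrt τ with hpdef
  set q := Real.sqrt (σ-τ) with hqdef
  set s := Real.sqrt σ with hsdef
  have hsum : s^2 = p^2 + q^2 := by rw [hp2, hq2, hs2]; ring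
  rw [← hq2, ← hp2]
  field_simp
  ring_nf
  linear_combination (-x*q^2 - y*p^2) * hsum

section Limits
variable {x y σ : ℝ}

lemma Dcont : Continuous (fun τ : ℝ => Real.sqrt σ * (Real.sqrt τ * Real.sqrt (σ-τ))) :=
  continuous_const.mul (Real.continuous_sqrt.mul
    (Real.continuous_sqrt.comp (continuous_const.sub continuous_id)))

lemma tendsto_D_zero (hσ : 0 < σ) :
    Tendsto (fun τ : ℝ => Real.sqrt σ * (Real.sqrt τ * Real.sqrt (σ-τ))) (𝓝[>] 0) (𝓝[>] 0) := by
  apply tendsto_nhdsWithin_of_tendsto_nhds_of_eventually_within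
  · have h := (Dcont (σ := σ)).tendsto 0
    simpa using h.mono_left nhdsWithin_le_nhds
  · filter_upwards [Ioo_mem_nhdsGT_of_mem (Set.left_mem_Ico.2 hσ)] with τ hτ
    have h3 : 0 < σ - τ := by linarith [hτ.2]
    have := hτ.1
    simp only [Set.mem_Ioi]
    positivity

lemma tendsto_D_sigma (hσ : 0 < σ) :
    Tendsto (fun τ : ℝ => Real.sqrt σ * (Real.sqrt τ * Real.sqrt (σ-τ))) (𝓝[<] σ) (𝓝[>] 0) := by
  apply tendsto_nhdsWithin_of_tendsto_nhds_of_eventually_within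
  · have h := (Dcont (σ := σ)).tendsto σ
    simpa using h.mono_left nhdsWithin_le_nhds
  · filter_upwards [Ioo_mem_nhdsLT_of_mem (Set.right_mem_Ioc.2 hσ)] with τ hτ
    have h3 : 0 < σ - τ := by linarith [hτ.2]
    have := hτ.1
    simp only [Set.mem_Ioi]
    positivity

lemma tendsto_N (c : ℝ) : Tendsto (fun τ : ℝ => x*(σ-τ) - y*τ) (𝓝 c) (𝓝 (x*(σ-c) - y*c)) := by
  exact ((continuous_const.mul (continuous_const.sub continuous_id)).sub
    (continuous_const.mul continuous_id)).tendsto c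

lemma uker_eq : uker x y σ = fun τ =>
    (x*(σ-τ) - y*τ) * (Real.sqrt σ * (Real.sqrt τ * Real.sqrt (σ-τ)))⁻¹ := by
  funext τ; rw [uker, div_eq_mul_inv]

lemma uker_tendsto_zero (hx : 0 < x) (hσ : 0 < σ) :
    Tendsto (uker x y σ) (𝓝[>] 0) atTop := by
  rw [uker_eq]
  refine Filter.Tendsto.pos_mul_atTop (show (0:ℝ) < x*σ by positivity) ?_
    (tendsto_D_zero hσ).inv_tendsto_nhdsGT_zero
  have := (tendsto_N (x := x) (y := y) (σ := σ) 0).mono_left (nhdsWithin_le_nhds (s := Ioi 0))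
  simpa using this

lemma uker_tendsto_sigma_neg (hy : 0 < y) (hσ : 0 < σ) :
    Tendsto (uker x y σ) (𝓝[<] σ) atBot := by
  rw [uker_eq]
  refine Filter.Tendsto.neg_mul_atTop (show x*(σ-σ) - y*σ < 0 by simp; positivity) ?_
    (tendsto_D_sigma hσ).inv_tendsto_nhdsGT_zero
  exact (tendsto_N σ).mono_left (nhdsWithin_le_nhds (s := Iio σ))

lemma uker_tendsto_sigma_pos (hy : y < 0) (hσ : 0 < σ) :
    Tendsto (uker x y σ) (𝓝[<] σ) atTop := by
  rw [uker_eq]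
  refine Filter.Tendsto.pos_mul_atTop (show (0:ℝ) < x*(σ-σ) - y*σ by simp; nlinarith) ?_
    (tendsto_D_sigma hσ).inv_tendsto_nhdsGT_zero
  exact (tendsto_N σ).mono_left (nhdsWithin_le_nhds (s := Iio σ))

end Limits

lemma sqrt_two_pi_cube {t : ℝ} (ht : 0 < t) :
    Real.sqrt (2 * Real.pi * t ^ 3) = Real.sqrt (2*Real.pi) * Real.sqrt t ^ 3 := by
  rw [Real.sqrt_mul (by positivity), show t^3 = t^2*t by ring,
    Real.sqrt_mul (sq_nonneg t), Real.sqrt_sq ht.le, pow_succ, Real.sq_sqrt ht.le]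

lemma uker_sq {x y σ τ : ℝ} (hσ : 0 < σ) (h1 : 0 < τ) (h2 : τ < σ) :
    uker x y σ τ ^ 2 = (x*(σ-τ) - y*τ)^2 / (σ*(τ*(σ-τ))) := by
  rw [uker, div_pow, mul_pow, mul_pow, Real.sq_sqrt hσ.le, Real.sq_sqrt h1.le,
    Real.sq_sqrt (by linarith : (0:ℝ) ≤ σ - τ)]

lemma exponent_identity {x y σ τ : ℝ} (hσ : 0 < σ) (h1 : 0 < τ) (h2 : τ < σ) :
    -(y - (σ-τ))^2/(2*(σ-τ)) + -(x - τ)^2/(2*τ) =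
      (x + y - σ/2 - (x+y)^2/(2*σ)) + -(uker x y σ τ)^2/2 := by
  rw [uker_sq hσ h1 h2]
  have h3 : (0:ℝ) < σ - τ := by linarith
  field_simp
  ring

lemma hker_product {x y σ τ : ℝ} (hσ : 0 < σ) (h1 : 0 < τ) (h2 : τ < σ) :
    hker (σ-τ) y * hker τ x =
      Real.exp (x + y - σ/2 - (x+y)^2/(2*σ)) / (2*Real.pi) *
        ((x+y)/(2*σ) * ((x*(σ-τ)+y*τ)/(Real.sqrt τ * Real.sqrt (σ-τ))^3 *
            Real.exp (-(uker x y σ τ)^2/2)) +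
         (y-x)/(2*σ) * ((x*(σ-τ)-y*τ)/(Real.sqrt τ * Real.sqrt (σ-τ))^3 *
            Real.exp (-(uker x y σ τ)^2/2))) := by
  have h3 : (0:ℝ) < σ - τ := by linarith
  rw [hker, hker, if_pos h3, if_pos h1, sqrt_two_pi_cube h3, sqrt_two_pi_cube h1]
  rw [div_mul_div_comm]
  have hexp : Real.exp (-(y - (σ-τ))^2/(2*(σ-τ))) * Real.exp (-(x - τ)^2/(2*τ)) =
      Real.exp (x + y - σ/2 - (x+y)^2/(2*σ)) * Real.exp (-(uker x y σ τ)^2/2) := by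
    rw [← Real.exp_add, ← Real.exp_add, exponent_identity hσ h1 h2]
  have hS : Real.sqrt (2*Real.pi) ^ 2 = 2*Real.pi := Real.sq_sqrt (by positivity)
  have hp : (0:ℝ) < Real.sqrt τ := Real.sqrt_pos.2 h1
  have hq : (0:ℝ) < Real.sqrt (σ-τ) := Real.sqrt_pos.2 h3
  have hS0 : (0:ℝ) < Real.sqrt (2*Real.pi) := Real.sqrt_pos.2 (by positivity)
  rw [show y * Real.exp (-(y - (σ - τ)) ^ 2 / (2 * (σ - τ))) * (x * Real.exp (-(x - τ) ^ 2 / (2 * τ)))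
      = x * y * (Real.exp (-(y - (σ-τ))^2/(2*(σ-τ))) * Real.exp (-(x - τ)^2/(2*τ))) by ring, hexp]
  rw [← hS]
  field_simp
  rw [Real.sqrt_sq hS0.le]
  ring

end FPAux

/-- Divisibility (convolution) property of first-passage densities of a
Brownian motion with unit negative drift: for `x, y, σ > 0`,
`∫_0^σ h(σ-τ, y) h(τ, x) dτ = h(σ, x + y)`. -/
theorem first_passage_density_convolution (x y σ : ℝ) (hx : 0 < x) (hy : 0 < y)
    (hσ : 0 < σ) :
    ∫ τ in (0 : ℝ)..σ, hker (σ - τ) y * hker τ x = hker σ (x + y) := by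
  have hs : (0:ℝ) < Real.sqrt σ := Real.sqrt_pos.2 hσ
  set P : ℝ → ℝ := fun τ => (x*(σ-τ)+y*τ)/(Real.sqrt τ * Real.sqrt (σ-τ))^3 *
    Real.exp (-(uker x y σ τ)^2/2) with hPdef
  set M : ℝ → ℝ := fun τ => (x*(σ-τ)-y*τ)/(Real.sqrt τ * Real.sqrt (σ-τ))^3 *
    Real.exp (-(uker x y σ τ)^2/2) with hMdef
  -- derivative facts
  have hderivP : ∀ τ ∈ Ioo (0:ℝ) σ,
      HasDerivAt (fun t => -(2/Real.sqrt σ) * Phi (uker x y σ t)) (P τ) τ := by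
    intro τ hτ
    have hu := hasDerivAt_uker (x := x) (y := y) hσ hτ
    have := ((Phi_hasDerivAt (uker x y σ τ)).comp τ hu).const_mul (-(2/Real.sqrt σ))
    convert this using 1
    case e'_4 => rfl
    case e'_5 => rfl
    case e'_8 => rfl
    rw [hPdef]
    simp only
    rw [show -(2/Real.sqrt σ) * (Real.exp (-(uker x y σ τ)^2/2) * (-(Real.sqrt σ/2) *
          ((x*(σ-τ)+y*τ)/(Real.sqrt τ * Real.sqrt (σ-τ))^3)))
        = (2/Real.sqrt σ*(Real.sqrt σ/2)) * (Real.exp (-(uker x y σ τ)^2/2) *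
          ((x*(σ-τ)+y*τ)/(Real.sqrt τ * Real.sqrt (σ-τ))^3)) by ring,
      show 2/Real.sqrt σ*(Real.sqrt σ/2) = 1 by field_simp]
    ring
  have hderivM : ∀ τ ∈ Ioo (0:ℝ) σ,
      HasDerivAt (fun t => -(2/Real.sqrt σ * Real.exp (2*x*y/σ)) * Phi (uker x (-y) σ t))
        (M τ) τ := by
    intro τ hτ
    have hu := hasDerivAt_uker (x := x) (y := -y) hσ hτ
    have := ((Phi_hasDerivAt (uker x (-y) σ τ)).comp τ hu).const_mul
      (-(2/Real.sqrt σ * Real.exp (2*x*y/σ)))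
    convert this using 1
    case e'_4 => rfl
    case e'_5 => rfl
    case e'_8 => rfl
    have hvsq : (uker x (-y) σ τ)^2 = (uker x y σ τ)^2 + 4*x*y/σ := by
      rw [uker_sq hσ hτ.1 hτ.2, uker_sq hσ hτ.1 hτ.2]
      have h1 := hτ.1; have h2 := hτ.2
      have h3 : (0:ℝ) < σ - τ := by linarith
      field_simp
      ring
    have hexp : Real.exp (2*x*y/σ) * Real.exp (-(uker x (-y) σ τ)^2/2) =
        Real.exp (-(uker x y σ τ)^2/2) := by
      rw [← Real.exp_add, hvsq]
      congr 1
      field_simp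
      ring
    rw [hMdef]
    simp only
    rw [show -(2/Real.sqrt σ * Real.exp (2*x*y/σ)) *
          (Real.exp (-(uker x (-y) σ τ)^2/2) * (-(Real.sqrt σ/2) *
            ((x*(σ-τ) + -y*τ)/(Real.sqrt τ * Real.sqrt (σ-τ))^3)))
        = (2/Real.sqrt σ*(Real.sqrt σ/2)) * (Real.exp (2*x*y/σ) *
            Real.exp (-(uker x (-y) σ τ)^2/2)) *
            ((x*(σ-τ) - y*τ)/(Real.sqrt τ * Real.sqrt (σ-τ))^3) by ring, hexp,
      show 2/Real.sqrt σ*(Real.sqrt σ/2) = 1 by field_simp]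
    ring
  -- A integral via myFTC
  have hPpos : ∀ τ ∈ Ioo (0:ℝ) σ, 0 ≤ P τ := by
    intro τ hτ
    have h1 := hτ.1; have h2 := hτ.2
    have h3 : (0:ℝ) < σ - τ := by linarith
    rw [hPdef]
    positivity
  have hlimA0 : Tendsto (fun t => -(2/Real.sqrt σ) * Phi (uker x y σ t)) (𝓝[>] (0:ℝ))
      (𝓝 (-(2/Real.sqrt σ) * (Real.sqrt (2*Real.pi)/2))) :=
    (Phi_atTop.comp (uker_tendsto_zero hx hσ)).const_mul _
  have hlimAσ : Tendsto (fun t => -(2/Real.sqrt σ) * Phi (uker x y σ t)) (𝓝[<] σ)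
      (𝓝 (-(2/Real.sqrt σ) * (-(Real.sqrt (2*Real.pi)/2)))) :=
    (Phi_atBot.comp (uker_tendsto_sigma_neg hy hσ)).const_mul _
  obtain ⟨hPint, hPval⟩ := myFTC hσ hderivP hlimA0 hlimAσ hPpos
  have hPval' : ∫ τ in (0:ℝ)..σ, P τ = 2*Real.sqrt (2*Real.pi)/Real.sqrt σ := by
    rw [hPval]; field_simp; ring
  -- M integrable by domination
  have hMmeas : AEStronglyMeasurable M (volume.restrict (Set.uIoc (0:ℝ) σ)) := by
    refine (Measurable.aestronglyMeasurable ?_)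
    rw [hMdef]
    unfold uker
    fun_prop
  have hMint : IntervalIntegrable M volume 0 σ := by
    refine hPint.mono_fun hMmeas ?_
    rw [Set.uIoc_of_le hσ.le]
    refine (MeasureTheory.ae_restrict_iff' measurableSet_Ioc).2 (Filter.Eventually.of_forall ?_)
    intro τ hτ
    have h1 := hτ.1
    have h3 : (0:ℝ) ≤ σ - τ := by linarith [hτ.2]
    have hnum : |x*(σ-τ)-y*τ| ≤ |x*(σ-τ)+y*τ| := by
      rw [abs_of_nonneg (show (0:ℝ) ≤ x*(σ-τ)+y*τ by nlinarith)]
      exact abs_le.2 ⟨by nlinarith, by nlinarith⟩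
    simp only [hPdef, hMdef, Real.norm_eq_abs]
    rw [abs_mul, abs_mul, abs_div, abs_div, Real.abs_exp]
    gcongr
  -- M integral is zero
  have hlimM0 : Tendsto (fun t => -(2/Real.sqrt σ * Real.exp (2*x*y/σ)) * Phi (uker x (-y) σ t))
      (𝓝[>] (0:ℝ))
      (𝓝 (-(2/Real.sqrt σ * Real.exp (2*x*y/σ)) * (Real.sqrt (2*Real.pi)/2))) :=
    (Phi_atTop.comp (uker_tendsto_zero hx hσ)).const_mul _
  have hlimMσ : Tendsto (fun t => -(2/Real.sqrt σ * Real.exp (2*x*y/σ)) * Phi (uker x (-y) σ t))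
      (𝓝[<] σ)
      (𝓝 (-(2/Real.sqrt σ * Real.exp (2*x*y/σ)) * (Real.sqrt (2*Real.pi)/2))) :=
    (Phi_atTop.comp (uker_tendsto_sigma_pos (show -y < 0 by linarith) hσ)).const_mul _
  have hMval : ∫ τ in (0:ℝ)..σ, M τ = 0 := by
    rw [intervalIntegral.integral_eq_sub_of_hasDerivAt_of_tendsto hσ hderivM hMint hlimM0 hlimMσ]
    ring
  -- rewrite the integrand
  set K := Real.exp (x + y - σ/2 - (x+y)^2/(2*σ)) / (2*Real.pi) with hKdef
  have hcongr : (∫ τ in (0:ℝ)..σ, hker (σ-τ) y * hker τ x)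
      = ∫ τ in (0:ℝ)..σ, K * ((x+y)/(2*σ) * P τ + (y-x)/(2*σ) * M τ) := by
    apply intervalIntegral.integral_congr_ae
    have h0 : ∀ᵐ τ : ℝ, τ ∉ ({σ} : Set ℝ) := compl_mem_ae_iff.2 (measure_singleton σ)
    filter_upwards [h0] with τ hτ hmem
    rw [Set.uIoc_of_le hσ.le] at hmem
    have h2 : τ < σ := lt_of_le_of_ne hmem.2 (by simpa using hτ)
    exact hker_product hσ hmem.1 h2
  rw [hcongr, intervalIntegral.integral_const_mul,
    intervalIntegral.integral_add (hPint.const_mul _) (hMint.const_mul _),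
    intervalIntegral.integral_const_mul, intervalIntegral.integral_const_mul,
    hPval', hMval, mul_zero, add_zero, hKdef]
  -- final arithmetic
  rw [hker, if_pos hσ, sqrt_two_pi_cube hσ]
  have hS : Real.sqrt (2*Real.pi) ^ 2 = 2*Real.pi := Real.sq_sqrt (by positivity)
  have hσ2 : Real.sqrt σ ^ 2 = σ := Real.sq_sqrt hσ.le
  have hE : Real.exp (-(x + y - σ)^2/(2*σ)) = Real.exp (x + y - σ/2 - (x+y)^2/(2*σ)) := by
    congr 1; field_simp; ring
  rw [hE]
  have hS0 : (0:ℝ) < Real.sqrt (2*Real.pi) := Real.sqrt_pos.2 (by positivity)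
  rw [eq_div_iff (by positivity : Real.sqrt (2*Real.pi) * Real.sqrt σ ^ 3 ≠ 0),
    show Real.sqrt σ ^ 3 = σ * Real.sqrt σ by rw [pow_succ, hσ2]]
  field_simp
  ring_nf
  rw [Real.sq_sqrt (by positivity)]
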